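/- Let ζ₁,...,ζ_r be distinct points of (K*)ⁿ and a₁,...,a_r ∈ K* with K infinite (characteristic 0). Define the linear form Ω = Σᵢ aᵢ ev_{ζᵢ} on the Laurent polynomial ring K[x, x^{-1}]. Then the kernel of the associated Hankel operator, I = {p : Ω(pq) = 0 for all q}, is exactly the (radical) ideal of Laurent polynomials vanishing at all ζᵢ, and dim_K K[x,x^{-1}]/I = r. -/

import Mathlib

/-- Evaluation of a Laurent polynomial in `n` variables (an element of the monoid
algebra of `ℤⁿ` over `K`) at a point of `(K*)ⁿ`. -/
noncomputable def laurentEval {K : Type*} [Field K] {n : ℕ} (z : Fin n → Kˣ)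
    (p : AddMonoidAlgebra K (Fin n → ℤ)) : K :=
  Finsupp.sum p.coeff fun α c => c * ∏ i, ((z i ^ α i : Kˣ) : K)

/-- Evaluation as an algebra homomorphism. -/
noncomputable def laurentEvalAlgHom {K : Type*} [Field K] {n : ℕ} (z : Fin n → Kˣ) :
    AddMonoidAlgebra K (Fin n → ℤ) →ₐ[K] K :=
  AddMonoidAlgebra.lift K K (Fin n → ℤ)
    { toFun := fun α => ∏ i, ((z i ^ (Multiplicative.toAdd α) i : Kˣ) : K)
      map_one' := by simp
      map_mul' := fun α β => by
        simp [toAdd_mul, Pi.add_apply, zpow_add, Units.val_mul, Finset.prod_mul_distrib] }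

theorem laurentEvalAlgHom_apply {K : Type*} [Field K] {n : ℕ} (z : Fin n → Kˣ)
    (p : AddMonoidAlgebra K (Fin n → ℤ)) : laurentEvalAlgHom z p = laurentEval z p := by
  rw [laurentEvalAlgHom, AddMonoidAlgebra.lift_apply, laurentEval]
  simp [smul_eq_mul]

theorem hankel_kernel_eq_vanishing_ideal {K : Type*} [Field K] [CharZero K] {n r : ℕ}
    (ζ : Fin r → Fin n → Kˣ) (hζ : Function.Injective ζ)
    (a : Fin r → K) (ha : ∀ i, a i ≠ 0)
    (Ω : AddMonoidAlgebra K (Fin n → ℤ) → K)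
    (hΩ : ∀ p, Ω p = ∑ i, a i * laurentEval (ζ i) p)
    (I : Ideal (AddMonoidAlgebra K (Fin n → ℤ)))
    (hI : ∀ p, p ∈ I ↔ ∀ q, Ω (p * q) = 0) :
    (∀ p, p ∈ I ↔ ∀ i, laurentEval (ζ i) p = 0) ∧
      Module.finrank K (AddMonoidAlgebra K (Fin n → ℤ) ⧸ I) = r := by
  classical
  set A := AddMonoidAlgebra K (Fin n → ℤ) with hA
  set e : Fin r → (A →ₐ[K] K) := fun i => laurentEvalAlgHom (ζ i) with he
  have key : ∀ i p, e i p = laurentEval (ζ i) p := fun i p => laurentEvalAlgHom_apply _ p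
  -- monomials
  set X : Fin n → A := fun k => AddMonoidAlgebra.single (Pi.single k (1 : ℤ)) (1 : K) with hX'
  have hX : ∀ (m : Fin r) (k : Fin n), e m (X k) = ζ m k := by
    intro m k
    rw [key, hX']
    simp only [laurentEval, AddMonoidAlgebra.coeff_single]
    rw [Finsupp.sum_single_index (by simp), one_mul]
    rw [Fintype.prod_eq_single k (fun i hi => by simp [Pi.single_eq_of_ne hi])]
    simp
  -- interpolation
  have interp : ∀ j : Fin r, ∃ q : A, ∀ i, e i q = if i = j then 1 else 0 := by
    intro j
    have hk : ∀ i : Fin r, i ≠ j → ∃ k, (ζ j k : K) - (ζ i k : K) ≠ 0 := by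
      intro i hij
      obtain ⟨k, hk⟩ := Function.ne_iff.mp (fun h : ζ i = ζ j => hij (hζ h))
      exact ⟨k, sub_ne_zero.mpr fun h => hk (Units.ext h).symm⟩
    choose k hkne using hk
    refine ⟨∏ i : Fin r, ?_, ?_⟩
    · exact if h : i = j then 1 else
        ((ζ j (k i h) : K) - (ζ i (k i h) : K))⁻¹ •
          (X (k i h) - algebraMap K A ((ζ i (k i h) : K)))
    · intro m
      rw [map_prod]
      by_cases hm : m = j
      · subst hm
        rw [if_pos rfl]
        apply Finset.prod_eq_one
        intro i _
        by_cases h : i = m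
        · simp [h]
        · simp only [dif_neg h, map_smul, map_sub, hX, AlgHom.commutes,
            Algebra.algebraMap_self_apply, smul_eq_mul]
          exact inv_mul_cancel₀ (hkne i h)
      · rw [if_neg hm]
        apply Finset.prod_eq_zero (Finset.mem_univ m)
        simp only [dif_neg hm, map_smul, map_sub, hX, AlgHom.commutes,
          Algebra.algebraMap_self_apply, smul_eq_mul, sub_self, mul_zero]
  choose q hq using interp
  -- main membership characterization
  have main : ∀ p, p ∈ I ↔ ∀ i, e i p = 0 := by
    intro p
    rw [hI]
    constructor
    · intro h i
      have := h (q i)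
      rw [hΩ] at this
      simp only [← key, map_mul] at this
      rw [Finset.sum_eq_single i (fun m _ hmi => by rw [hq i m, if_neg hmi, mul_zero, mul_zero])
        (fun hi => absurd (Finset.mem_univ i) hi), hq i i, if_pos rfl, mul_one] at this
      exact (mul_eq_zero.mp this).resolve_left (ha i)
    · intro h q'
      rw [hΩ]
      apply Finset.sum_eq_zero
      intro m _
      rw [← key, map_mul, h m, zero_mul, mul_zero]
  refine ⟨fun p => (main p).trans (by simp [key]), ?_⟩
  -- the algebra map to K^r
  set Φ : A →ₐ[K] (Fin r → K) := Pi.algHom K (fun _ : Fin r => K) e with hΦ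
  have hsurj : Function.Surjective Φ := by
    intro v
    refine ⟨∑ j, v j • q j, ?_⟩
    funext i
    show e i (∑ j, v j • q j) = v i
    rw [map_sum]
    rw [Finset.sum_eq_single i (fun m _ hmi => by
        rw [map_smul, hq m i, if_neg (Ne.symm hmi), smul_zero])
      (fun hi => absurd (Finset.mem_univ i) hi)]
    rw [map_smul, hq i i, if_pos rfl, smul_eq_mul, mul_one]
  have hker : RingHom.ker Φ = I := by
    ext p
    rw [RingHom.mem_ker, main p]
    constructor
    · intro h i
      have := congrFun h i
      exact this
    · intro h
      funext i
      exact h i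
  have equiv := Ideal.quotientKerAlgEquivOfSurjective hsurj
  subst hker
  rw [equiv.toLinearEquiv.finrank_eq]
  simp [Module.finrank_pi]
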